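/- (Lemma 1, Optimality of the weight matrix.) Assume Condition C.1, that E[‖ψ(β₀, Y_1)‖²] < ∞, and that for each j = 1, …, J the block estimators β̂_{j,N} converge in probability to β₀ as N → ∞. Then the weight matrix V̂_N converges in probability to the variability matrix v(β₀) as N → ∞ (entrywise, equivalently in any matrix norm). -/

import Mathlib

open MeasureTheory ProbabilityTheory Filter Matrix
open scoped ENNReal NNReal RealInnerProductSpace BigOperators Classical

noncomputable section DIMMSetup

/-- The standard Gaussian measure on `EuclideanSpace ℝ ι`: the pushforward of the
`ι`-indexed product of standard real Gaussians under the canonical identification. -/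
def stdGaussian (ι : Type*) [Fintype ι] : Measure (EuclideanSpace ℝ ι) :=
  Measure.map (⇑(EuclideanSpace.equiv ι ℝ).symm) (Measure.pi fun _ : ι => gaussianReal 0 1)

/-- The positive semidefinite square root of a matrix (junk value `0` when the matrix is
not positive semidefinite). -/
def matSqrt {ι : Type*} [Fintype ι] [DecidableEq ι] (S : Matrix ι ι ℝ) : Matrix ι ι ℝ :=
  if h : S.PosSemidef then
    h.1.eigenvectorUnitary.1 * diagonal ((↑) ∘ (Real.sqrt ·) ∘ h.1.eigenvalues) *
      (star h.1.eigenvectorUnitary : Matrix ι ι ℝ)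
  else 0

/-- Matrix-vector multiplication as a map of Euclidean spaces. -/
def mulVecE {m n : Type*} [Fintype n] (A : Matrix m n ℝ) (x : EuclideanSpace ℝ n) :
    EuclideanSpace ℝ m :=
  (WithLp.equiv 2 (m → ℝ)).symm (A.mulVec ((WithLp.equiv 2 (n → ℝ)) x))

/-- The multivariate normal distribution `N(0, S)`: the pushforward of the standard Gaussian
under `x ↦ S^{1/2} x`, where `S^{1/2}` is the positive semidefinite square root. -/
def mvNormal {ι : Type*} [Fintype ι] [DecidableEq ι] (S : Matrix ι ι ℝ) :
    Measure (EuclideanSpace ℝ ι) :=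
  (stdGaussian ι).map (fun x => mulVecE (matSqrt S) x)

/-- The chi-squared distribution with `k` degrees of freedom: the law of `‖Z‖²` for a
standard Gaussian `Z` on `ℝ^k`. -/
def chiSq (k : ℕ) : Measure ℝ :=
  (stdGaussian (Fin k)).map (fun x => ‖x‖ ^ 2)

/-- Convergence in distribution: weak convergence of the laws of the random elements
`X N` to the measure `μ`. -/
def ConvInDist {Ω V : Type*} [MeasurableSpace Ω] [TopologicalSpace V] [MeasurableSpace V]
    (P : Measure Ω) (X : ℕ → Ω → V) (μ : Measure V) : Prop :=
  ∀ f : BoundedContinuousFunction V ℝ,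
    Tendsto (fun N => ∫ ω, f (X N ω) ∂P) atTop (nhds (∫ x, f x ∂μ))

/-- The ℓ²→ℓ² operator norm of a matrix (the operator norm induced by the Euclidean norms). -/
def opNorm {m n : Type*} [Fintype m] [Fintype n] [DecidableEq n] (A : Matrix m n ℝ) : ℝ :=
  ‖LinearMap.toContinuousLinearMap (Matrix.toEuclideanLin A)‖

/-- A sequence of real random variables is bounded in probability (`O_p(1)`): for every
`ε > 0` there is `M` with `limsup_N P(|X_N| > M) < ε`. -/
def BddInProb {Ω : Type*} [MeasurableSpace Ω] (P : Measure Ω) (X : ℕ → Ω → ℝ) : Prop :=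
  ∀ ε : ℝ≥0∞, 0 < ε → ∃ M : ℝ, Filter.limsup (fun N => P {ω | M < |X N ω|}) atTop < ε

/-- The `(i,j)`-th `p × p` block of a `(Jp) × (Jp)` matrix, where `ℝ^{Jp}` is indexed by
`Fin J × Fin p` (the pair `(j, a)` encodes coordinate `(j-1)p + a`). -/
def blockOf {J p : ℕ} (W : Matrix (Fin J × Fin p) (Fin J × Fin p) ℝ) (i j : Fin J) :
    Matrix (Fin p) (Fin p) ℝ :=
  fun a b => W (i, a) (j, b)

/-- The `j`-th `p × p` block of a `(Jp) × p` matrix (the `j`-th block of rows). -/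
def rowBlockOf {J p : ℕ} (S : Matrix (Fin J × Fin p) (Fin p) ℝ) (j : Fin J) :
    Matrix (Fin p) (Fin p) ℝ :=
  fun a b => S (j, a) b

end DIMMSetup

open scoped Topology

open scoped Topology in
private lemma abs_coord_le_norm' {ι : Type*} [Fintype ι] (x : EuclideanSpace ℝ ι) (k : ι) :
    |x k| ≤ ‖x‖ := by
  rw [EuclideanSpace.norm_eq]
  calc |x k| = Real.sqrt (|x k| ^ 2) := by rw [Real.sqrt_sq (abs_nonneg _)]
    _ ≤ Real.sqrt (∑ i, ‖x i‖ ^ 2) := by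
        apply Real.sqrt_le_sqrt
        have := Finset.single_le_sum (f := fun i => ‖x i‖ ^ 2)
          (fun i _ => sq_nonneg _) (Finset.mem_univ k)
        simpa [Real.norm_eq_abs] using this

/-- **Lemma 1 (Optimality of the weight matrix).**
Under Condition C.1, a finite second moment of `ψ(β₀, Y₁)`, and consistency of the block
estimators `β̂_{j,N}`, the weight matrix `V̂_N` converges in probability (entrywise) to the
variability matrix `v(β₀)`. -/
theorem dimm_lemma1_weight_matrix_optimality
    {Ω : Type*} [MeasurableSpace Ω] (P : Measure Ω) [IsProbabilityMeasure P]
    {E : Type*} [MeasurableSpace E]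
    (p J : ℕ) (hp : 0 < p) (hJ : 0 < J)
    -- the i.i.d. data
    (Y : ℕ → Ω → E) (hYmeas : ∀ i, Measurable (Y i))
    (hYindep : iIndepFun Y P)
    (hYident : ∀ i, IdentDistrib (Y i) (Y 0) P P)
    -- the estimating function and its population quantities
    (ψ : EuclideanSpace ℝ (Fin p) → E → EuclideanSpace ℝ (Fin J × Fin p))
    (hψmeas : Measurable fun x : EuclideanSpace ℝ (Fin p) × E => ψ x.1 x.2)
    (β₀ : EuclideanSpace ℝ (Fin p))
    (m : EuclideanSpace ℝ (Fin p) → EuclideanSpace ℝ (Fin J × Fin p))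
    (hm : ∀ β, m β = ∫ ω, ψ β (Y 0 ω) ∂P)
    (v : EuclideanSpace ℝ (Fin p) → Matrix (Fin J × Fin p) (Fin J × Fin p) ℝ)
    (hv : ∀ β k l, v β k l = ∫ ω, ψ β (Y 0 ω) k * ψ β (Y 0 ω) l ∂P)
    -- Condition C.1: unique zero, positive definite (hence symmetric) variability matrix,
    -- and uniform Lipschitz continuity of ψ on a neighbourhood of β₀
    (hzero : ∀ β, m β = 0 ↔ β = β₀)
    (hvpd : (v β₀).PosDef)
    (Nbd : Set (EuclideanSpace ℝ (Fin p))) (hNbd : Nbd ∈ nhds β₀)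
    (C : ℝ) (hCpos : 0 < C)
    (hLip : ∀ β₁ ∈ Nbd, ∀ β₂ ∈ Nbd, ∀ e : E, ‖ψ β₁ e - ψ β₂ e‖ ≤ C * ‖β₁ - β₂‖)
    -- finite second moment: E‖ψ(β₀, Y₁)‖² < ∞
    (hmom : Integrable (fun ω => ‖ψ β₀ (Y 0 ω)‖ ^ 2) P)
    -- measurable block estimators, consistent for β₀
    (βhat : ℕ → Fin J → Ω → EuclideanSpace ℝ (Fin p))
    (hβhatmeas : ∀ N j, Measurable (βhat N j))
    (hβhatcons : ∀ j, TendstoInMeasure P (fun N => βhat N j) atTop (fun _ => β₀))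
    -- the weight matrix V̂_N = (1/N) Σᵢ ψ̂ᵢᴺ (ψ̂ᵢᴺ)ᵀ, with j-th block of ψ̂ᵢᴺ equal to
    -- ψ_j(β̂_{j,N}, Y_i)
    (Vhat : ℕ → Ω → Matrix (Fin J × Fin p) (Fin J × Fin p) ℝ)
    (hVhat : ∀ N ω k l, Vhat N ω k l = (N : ℝ)⁻¹ *
      ∑ i ∈ Finset.range N, ψ (βhat N k.1 ω) (Y i ω) k * ψ (βhat N l.1 ω) (Y i ω) l) :
    -- conclusion: V̂_N → v(β₀) in probability, entrywise
    ∀ k l, TendstoInMeasure P (fun N ω => Vhat N ω k l) atTop (fun _ => v β₀ k l) := by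
  
  intro k l
  classical
  -- basic measurability facts
  have hψβ : Measurable fun e : E => ψ β₀ e :=
    hψmeas.comp (measurable_const.prodMk measurable_id)
  have hcoord : ∀ j : Fin J × Fin p,
      Measurable fun x : EuclideanSpace ℝ (Fin J × Fin p) => x j := fun j =>
    (EuclideanSpace.proj j (𝕜 := ℝ)).continuous.measurable
  have hfZ : Measurable fun e : E => ψ β₀ e k * ψ β₀ e l :=
    ((hcoord k).comp hψβ).mul ((hcoord l).comp hψβ)
  have hfG : Measurable fun e : E => ‖ψ β₀ e‖ := hψβ.norm
  -- integrability
  have hZint : Integrable (fun ω => ψ β₀ (Y 0 ω) k * ψ β₀ (Y 0 ω) l) P := by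
    refine hmom.mono ((hfZ.comp (hYmeas 0)).aestronglyMeasurable) ?_
    filter_upwards with ω
    have h1 := abs_coord_le_norm' (ψ β₀ (Y 0 ω)) k
    have h2 := abs_coord_le_norm' (ψ β₀ (Y 0 ω)) l
    rw [Real.norm_eq_abs, Real.norm_eq_abs, abs_of_nonneg (sq_nonneg ‖ψ β₀ (Y 0 ω)‖), abs_mul]
    rw [sq]
    exact mul_le_mul h1 h2 (abs_nonneg _) (norm_nonneg _)
  have hGint : Integrable (fun ω => ‖ψ β₀ (Y 0 ω)‖) P := by
    refine ((integrable_const (1 : ℝ)).add hmom).mono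
      ((hfG.comp (hYmeas 0)).aestronglyMeasurable) ?_
    filter_upwards with ω
    have h0 : (0 : ℝ) ≤ ‖ψ β₀ (Y 0 ω)‖ := norm_nonneg _
    have hle : ‖ψ β₀ (Y 0 ω)‖ ≤ 1 + ‖ψ β₀ (Y 0 ω)‖ ^ 2 := by
      nlinarith [sq_nonneg (‖ψ β₀ (Y 0 ω)‖ - 1)]
    have hpos : (0 : ℝ) ≤ 1 + ‖ψ β₀ (Y 0 ω)‖ ^ 2 := by positivity
    simpa [Real.norm_eq_abs, abs_of_nonneg h0, abs_of_nonneg hpos] using hle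
  -- strong laws of large numbers
  have hZlim : ∀ᵐ ω ∂P, Tendsto
      (fun n : ℕ => (n : ℝ)⁻¹ * ∑ i ∈ Finset.range n, ψ β₀ (Y i ω) k * ψ β₀ (Y i ω) l)
      atTop (𝓝 (v β₀ k l)) := by
    have h := strong_law_ae (μ := P) (fun i ω => ψ β₀ (Y i ω) k * ψ β₀ (Y i ω) l) hZint
      (fun i j hij => (hYindep.indepFun hij).comp hfZ hfZ)
      (fun i => (hYident i).comp hfZ)
    have hveq : P[fun ω => ψ β₀ (Y 0 ω) k * ψ β₀ (Y 0 ω) l] = v β₀ k l := (hv β₀ k l).symm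
    rw [hveq] at h
    simpa [smul_eq_mul] using h
  set Mr : ℝ := P[fun ω => ‖ψ β₀ (Y 0 ω)‖] with hMr
  have hGlim : ∀ᵐ ω ∂P, Tendsto
      (fun n : ℕ => (n : ℝ)⁻¹ * ∑ i ∈ Finset.range n, ‖ψ β₀ (Y i ω)‖)
      atTop (𝓝 Mr) := by
    have h := strong_law_ae (μ := P) (fun i ω => ‖ψ β₀ (Y i ω)‖) hGint
      (fun i j hij => (hYindep.indepFun hij).comp hfG hfG)
      (fun i => (hYident i).comp hfG)
    simpa [smul_eq_mul] using h
  -- measurability of the entries of the weight matrix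
  have hVmeas : ∀ N, Measurable fun ω => Vhat N ω k l := by
    intro N
    have hEq : (fun ω => Vhat N ω k l) = fun ω =>
        (N : ℝ)⁻¹ * ∑ i ∈ Finset.range N,
          ψ (βhat N k.1 ω) (Y i ω) k * ψ (βhat N l.1 ω) (Y i ω) l := by
      funext ω; exact hVhat N ω k l
    rw [hEq]
    refine measurable_const.mul (Finset.measurable_sum _ fun i _ => ?_)
    exact ((hcoord k).comp (hψmeas.comp ((hβhatmeas N k.1).prodMk (hYmeas i)))).mul
      ((hcoord l).comp (hψmeas.comp ((hβhatmeas N l.1).prodMk (hYmeas i))))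
  have hbase : β₀ ∈ Nbd := mem_of_mem_nhds hNbd
  -- the key claim: along every subsequence there is a further subsequence with a.e. convergence
  have claim : ∀ ns : ℕ → ℕ, Tendsto ns atTop atTop → ∃ ms : ℕ → ℕ,
      ∀ᵐ ω ∂P, Tendsto (fun n => Vhat (ns (ms n)) ω k l) atTop (𝓝 (v β₀ k l)) := by
    intro ns hns
    have h1 : TendstoInMeasure P (fun n => βhat (ns n) k.1) atTop fun _ => β₀ :=
      fun δ hδ => (hβhatcons k.1 δ hδ).comp hns
    obtain ⟨m1, hm1, hae1⟩ := h1.exists_seq_tendsto_ae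
    have h2 : TendstoInMeasure P (fun n => βhat (ns (m1 n)) l.1) atTop fun _ => β₀ :=
      fun δ hδ => (hβhatcons l.1 δ hδ).comp (hns.comp hm1.tendsto_atTop)
    obtain ⟨m2, hm2, hae2⟩ := h2.exists_seq_tendsto_ae
    refine ⟨m1 ∘ m2, ?_⟩
    have hφ : Tendsto (fun n => ns (m1 (m2 n))) atTop atTop :=
      hns.comp (hm1.tendsto_atTop.comp hm2.tendsto_atTop)
    filter_upwards [hZlim, hGlim, hae1, hae2] with ω hZ hG h1ω h2ω
    set φ : ℕ → ℕ := fun n => ns (m1 (m2 n)) with hφdef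
    have hβk : Tendsto (fun n => βhat (φ n) k.1 ω) atTop (𝓝 β₀) :=
      h1ω.comp hm2.tendsto_atTop
    have hβl : Tendsto (fun n => βhat (φ n) l.1 ω) atTop (𝓝 β₀) := h2ω
    -- averages along the subsequence
    have hA : Tendsto (fun n => (φ n : ℝ)⁻¹ *
        ∑ i ∈ Finset.range (φ n), ψ β₀ (Y i ω) k * ψ β₀ (Y i ω) l)
        atTop (𝓝 (v β₀ k l)) := hZ.comp hφ
    have hGavg : Tendsto (fun n => (φ n : ℝ)⁻¹ *
        ∑ i ∈ Finset.range (φ n), ‖ψ β₀ (Y i ω)‖) atTop (𝓝 Mr) := hG.comp hφ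
    -- the deterministic key bound
    have key : ∀ N : ℕ, βhat N k.1 ω ∈ Nbd → βhat N l.1 ω ∈ Nbd →
        |Vhat N ω k l - (N : ℝ)⁻¹ *
            ∑ i ∈ Finset.range N, ψ β₀ (Y i ω) k * ψ β₀ (Y i ω) l| ≤
          (C * ‖βhat N k.1 ω - β₀‖) * (C * ‖βhat N l.1 ω - β₀‖)
          + (C * ‖βhat N k.1 ω - β₀‖) *
              ((N : ℝ)⁻¹ * ∑ i ∈ Finset.range N, ‖ψ β₀ (Y i ω)‖)
          + ((N : ℝ)⁻¹ * ∑ i ∈ Finset.range N, ‖ψ β₀ (Y i ω)‖) *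
              (C * ‖βhat N l.1 ω - β₀‖) := by
      intro N hkN hlN
      have hck0 : (0 : ℝ) ≤ C * ‖βhat N k.1 ω - β₀‖ := by positivity
      have hcl0 : (0 : ℝ) ≤ C * ‖βhat N l.1 ω - β₀‖ := by positivity
      have hterm : ∀ i : ℕ,
          |ψ (βhat N k.1 ω) (Y i ω) k * ψ (βhat N l.1 ω) (Y i ω) l -
              ψ β₀ (Y i ω) k * ψ β₀ (Y i ω) l| ≤
            (C * ‖βhat N k.1 ω - β₀‖) * (C * ‖βhat N l.1 ω - β₀‖)
            + (C * ‖βhat N k.1 ω - β₀‖) * ‖ψ β₀ (Y i ω)‖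
            + ‖ψ β₀ (Y i ω)‖ * (C * ‖βhat N l.1 ω - β₀‖) := by
        intro i
        have hu : |ψ (βhat N k.1 ω) (Y i ω) k - ψ β₀ (Y i ω) k| ≤
            C * ‖βhat N k.1 ω - β₀‖ := by
          have h1 : ψ (βhat N k.1 ω) (Y i ω) k - ψ β₀ (Y i ω) k =
              (ψ (βhat N k.1 ω) (Y i ω) - ψ β₀ (Y i ω)) k := rfl
          rw [h1]
          exact (abs_coord_le_norm' _ _).trans (hLip _ hkN _ hbase _)
        have hw : |ψ (βhat N l.1 ω) (Y i ω) l - ψ β₀ (Y i ω) l| ≤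
            C * ‖βhat N l.1 ω - β₀‖ := by
          have h1 : ψ (βhat N l.1 ω) (Y i ω) l - ψ β₀ (Y i ω) l =
              (ψ (βhat N l.1 ω) (Y i ω) - ψ β₀ (Y i ω)) l := rfl
          rw [h1]
          exact (abs_coord_le_norm' _ _).trans (hLip _ hlN _ hbase _)
        have hu0 : |ψ β₀ (Y i ω) k| ≤ ‖ψ β₀ (Y i ω)‖ := abs_coord_le_norm' _ _
        have hw0 : |ψ β₀ (Y i ω) l| ≤ ‖ψ β₀ (Y i ω)‖ := abs_coord_le_norm' _ _
        set u := ψ (βhat N k.1 ω) (Y i ω) k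
        set u0 := ψ β₀ (Y i ω) k
        set w := ψ (βhat N l.1 ω) (Y i ω) l
        set w0 := ψ β₀ (Y i ω) l
        calc |u * w - u0 * w0|
            = |(u - u0) * (w - w0) + (u - u0) * w0 + u0 * (w - w0)| := by ring_nf
          _ ≤ |(u - u0) * (w - w0)| + |(u - u0) * w0| + |u0 * (w - w0)| :=
              (abs_add_le _ _).trans (add_le_add_left (abs_add_le _ _) _)
          _ = |u - u0| * |w - w0| + |u - u0| * |w0| + |u0| * |w - w0| := by
              rw [abs_mul, abs_mul, abs_mul]
          _ ≤ _ :=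
              add_le_add (add_le_add (mul_le_mul hu hw (abs_nonneg _) hck0)
                (mul_le_mul hu hw0 (abs_nonneg _) hck0))
                (mul_le_mul hu0 hw (abs_nonneg _) (norm_nonneg _))
      have hNinv : (0 : ℝ) ≤ (N : ℝ)⁻¹ := by positivity
      have hNle : (N : ℝ)⁻¹ * (N : ℝ) ≤ 1 := by
        rcases Nat.eq_zero_or_pos N with h | h
        · simp [h]
        · rw [inv_mul_cancel₀ (by exact_mod_cast h.ne' : (N : ℝ) ≠ 0)]
      calc |Vhat N ω k l - (N : ℝ)⁻¹ *
              ∑ i ∈ Finset.range N, ψ β₀ (Y i ω) k * ψ β₀ (Y i ω) l|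
          = (N : ℝ)⁻¹ * |∑ i ∈ Finset.range N,
              (ψ (βhat N k.1 ω) (Y i ω) k * ψ (βhat N l.1 ω) (Y i ω) l -
                ψ β₀ (Y i ω) k * ψ β₀ (Y i ω) l)| := by
            rw [hVhat N ω k l, ← mul_sub, ← Finset.sum_sub_distrib, abs_mul,
              abs_of_nonneg hNinv]
        _ ≤ (N : ℝ)⁻¹ * ∑ i ∈ Finset.range N,
              |ψ (βhat N k.1 ω) (Y i ω) k * ψ (βhat N l.1 ω) (Y i ω) l -
                ψ β₀ (Y i ω) k * ψ β₀ (Y i ω) l| := by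
            gcongr
            exact Finset.abs_sum_le_sum_abs _ _
        _ ≤ (N : ℝ)⁻¹ * ∑ i ∈ Finset.range N,
              ((C * ‖βhat N k.1 ω - β₀‖) * (C * ‖βhat N l.1 ω - β₀‖)
                + (C * ‖βhat N k.1 ω - β₀‖) * ‖ψ β₀ (Y i ω)‖
                + ‖ψ β₀ (Y i ω)‖ * (C * ‖βhat N l.1 ω - β₀‖)) := by
            gcongr with i hi
            exact hterm i
        _ = ((N : ℝ)⁻¹ * (N : ℝ)) *
              ((C * ‖βhat N k.1 ω - β₀‖) * (C * ‖βhat N l.1 ω - β₀‖))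
            + (C * ‖βhat N k.1 ω - β₀‖) *
                ((N : ℝ)⁻¹ * ∑ i ∈ Finset.range N, ‖ψ β₀ (Y i ω)‖)
            + ((N : ℝ)⁻¹ * ∑ i ∈ Finset.range N, ‖ψ β₀ (Y i ω)‖) *
                (C * ‖βhat N l.1 ω - β₀‖) := by
            simp only [Finset.sum_add_distrib, Finset.sum_const, Finset.card_range,
              ← Finset.mul_sum, ← Finset.sum_mul, nsmul_eq_mul]
            ring
        _ ≤ _ := by
            have hq : ((N : ℝ)⁻¹ * (N : ℝ)) *
                ((C * ‖βhat N k.1 ω - β₀‖) * (C * ‖βhat N l.1 ω - β₀‖)) ≤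
                (C * ‖βhat N k.1 ω - β₀‖) * (C * ‖βhat N l.1 ω - β₀‖) := by
              nlinarith [mul_nonneg hck0 hcl0]
            linarith
    -- limits of the error bound
    have hnk : Tendsto (fun n => ‖βhat (φ n) k.1 ω - β₀‖) atTop (𝓝 0) :=
      tendsto_iff_norm_sub_tendsto_zero.mp hβk
    have hnl : Tendsto (fun n => ‖βhat (φ n) l.1 ω - β₀‖) atTop (𝓝 0) :=
      tendsto_iff_norm_sub_tendsto_zero.mp hβl
    have hckn : Tendsto (fun n => C * ‖βhat (φ n) k.1 ω - β₀‖) atTop (𝓝 0) := by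
      simpa using (tendsto_const_nhds (x := C) (f := atTop)).mul hnk
    have hcln : Tendsto (fun n => C * ‖βhat (φ n) l.1 ω - β₀‖) atTop (𝓝 0) := by
      simpa using (tendsto_const_nhds (x := C) (f := atTop)).mul hnl
    have hBtend : Tendsto (fun n =>
        (C * ‖βhat (φ n) k.1 ω - β₀‖) * (C * ‖βhat (φ n) l.1 ω - β₀‖)
        + (C * ‖βhat (φ n) k.1 ω - β₀‖) *
            ((φ n : ℝ)⁻¹ * ∑ i ∈ Finset.range (φ n), ‖ψ β₀ (Y i ω)‖)
        + ((φ n : ℝ)⁻¹ * ∑ i ∈ Finset.range (φ n), ‖ψ β₀ (Y i ω)‖) *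
            (C * ‖βhat (φ n) l.1 ω - β₀‖)) atTop (𝓝 0) := by
      have h := ((hckn.mul hcln).add (hckn.mul hGavg)).add (hGavg.mul hcln)
      simpa using h
    have hmemk : ∀ᶠ n in atTop, βhat (φ n) k.1 ω ∈ Nbd := hβk.eventually_mem hNbd
    have hmeml : ∀ᶠ n in atTop, βhat (φ n) l.1 ω ∈ Nbd := hβl.eventually_mem hNbd
    have hdiff : Tendsto (fun n => Vhat (φ n) ω k l - (φ n : ℝ)⁻¹ *
        ∑ i ∈ Finset.range (φ n), ψ β₀ (Y i ω) k * ψ β₀ (Y i ω) l) atTop (𝓝 0) := by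
      apply squeeze_zero_norm' ?_ hBtend
      filter_upwards [hmemk, hmeml] with n h1 h2
      simpa [Real.norm_eq_abs] using key (φ n) h1 h2
    have hsum := hA.add hdiff
    have hfun : (fun n => ((φ n : ℝ)⁻¹ *
          ∑ i ∈ Finset.range (φ n), ψ β₀ (Y i ω) k * ψ β₀ (Y i ω) l)
        + (Vhat (φ n) ω k l - (φ n : ℝ)⁻¹ *
          ∑ i ∈ Finset.range (φ n), ψ β₀ (Y i ω) k * ψ β₀ (Y i ω) l)) =
        fun n => Vhat (φ n) ω k l := by
      funext n; ring
    rw [hfun] at hsum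
    simpa using hsum
  -- conclude convergence in measure via the subsequence criterion
  intro ε hε
  apply tendsto_of_subseq_tendsto
  intro ns hns
  obtain ⟨ms, hms⟩ := claim ns hns
  exact ⟨ms, (tendstoInMeasure_of_tendsto_ae
    (fun n => (hVmeas (ns (ms n))).aestronglyMeasurable) hms) ε hε⟩
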